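/- For x ∈ (0,4], the cumulative distribution function of the quarter-circle-law eigenvalue density satisfies F_X(x) = (1/(2π))·( π + x√(4/x − 1) − 2·arctan( ((x−2)/(x−4))·√(4/x − 1) ) ), i.e., the derivative of the right-hand side equals (1/π)√(1/x − 1/4) on (0,4) and its limit as x → 0⁺ is 0. -/

import Mathlib

open Real MeasureTheory

/-- Quarter circle law eigenvalue density. -/
noncomputable def fX (x : ℝ) : ℝ :=
  if 0 < x ∧ x ≤ 4 then (1 / π) * Real.sqrt (1 / x - 1 / 4) else 0

/-- Closed form of the quarter circle law CDF. -/
noncomputable def FXclosed (x : ℝ) : ℝ :=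
  (1 / (2 * π)) * (π + x * Real.sqrt (4 / x - 1) -
    2 * Real.arctan (((x - 2) / (x - 4)) * Real.sqrt (4 / x - 1)))

/-- A smoother expression for the closed-form CDF. -/
noncomputable def Gaux (x : ℝ) : ℝ :=
  (1 / (2 * π)) * (π + Real.sqrt (x * (4 - x)) -
    2 * Real.arctan ((2 - x) / Real.sqrt (x * (4 - x))))

lemma FX_eq_Gaux {y : ℝ} (hy0 : 0 < y) (hy4 : y < 4) : FXclosed y = Gaux y := by
  have h4y : 0 < 4 - y := by linarith
  have hne : y - 4 ≠ 0 := by linarith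
  have hq : 0 < Real.sqrt (y * (4 - y)) := Real.sqrt_pos.2 (by positivity)
  have hdiv : 4 / y - 1 = (4 - y) / y := by field_simp
  have h1 : y * Real.sqrt (4 / y - 1) = Real.sqrt (y * (4 - y)) := by
    rw [hdiv]
    rw [show y * Real.sqrt ((4 - y) / y) = Real.sqrt (y ^ 2) * Real.sqrt ((4 - y) / y) by
      rw [Real.sqrt_sq hy0.le]]
    rw [← Real.sqrt_mul (by positivity)]
    congr 1
    field_simp
  have h2 : ((y - 2) / (y - 4)) * Real.sqrt (4 / y - 1)
      = (2 - y) / Real.sqrt (y * (4 - y)) := by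
    rw [hdiv]
    rw [eq_div_iff hq.ne']
    rw [mul_assoc, ← Real.sqrt_mul (by positivity)]
    rw [show (4 - y) / y * (y * (4 - y)) = (4 - y) ^ 2 by field_simp]
    rw [Real.sqrt_sq h4y.le]
    field_simp
    ring
  unfold FXclosed Gaux
  rw [h1, h2]

lemma Gaux_hasDerivAt {x : ℝ} (hx0 : 0 < x) (hx4 : x < 4) :
    HasDerivAt Gaux (fX x) x := by
  have h4x : 0 < 4 - x := by linarith
  have hp : 0 < x * (4 - x) := by positivity
  set q := Real.sqrt (x * (4 - x)) with hqdef
  have hq : 0 < q := Real.sqrt_pos.2 hp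
  have hq2 : q ^ 2 = x * (4 - x) := Real.sq_sqrt hp.le
  have hpi : (0:ℝ) < π := Real.pi_pos
  -- derivative of the inner polynomial
  have hpoly : HasDerivAt (fun y : ℝ => y * (4 - y)) (4 - 2 * x) x := by
    have h := (hasDerivAt_id x).fun_mul ((hasDerivAt_const x (4:ℝ)).fun_sub (hasDerivAt_id x))
    simp only [id_eq] at h
    refine h.congr_deriv ?_
    symm
    ring
  -- derivative of q
  have hsqrt : HasDerivAt (fun y : ℝ => Real.sqrt (y * (4 - y)))
      ((4 - 2 * x) / (2 * q)) x := hpoly.sqrt hp.ne'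
  -- derivative of the arctan argument
  have hnum : HasDerivAt (fun y : ℝ => (2 - y)) (-1 : ℝ) x := by
    have h := (hasDerivAt_const x (2:ℝ)).fun_sub (hasDerivAt_id x)
    simp only [id_eq] at h
    refine h.congr_deriv ?_
    symm
    ring
  have harg : HasDerivAt (fun y : ℝ => (2 - y) / Real.sqrt (y * (4 - y)))
      (-4 / q ^ 3) x := by
    have h := hnum.fun_div hsqrt hq.ne'
    rw [← hqdef] at h
    refine h.congr_deriv ?_
    symm
    rw [div_eq_div_iff (by positivity) (by positivity)]
    field_simp
    linear_combination 2 * hq2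
  -- derivative of arctan of the argument
  have harctan : HasDerivAt (fun y : ℝ => Real.arctan ((2 - y) / Real.sqrt (y * (4 - y))))
      (-1 / q) x := by
    have h := (Real.hasDerivAt_arctan ((2 - x) / q)).comp x harg
    refine h.congr_deriv ?_
    symm
    have h1 : 1 + ((2 - x) / q) ^ 2 = 4 / q ^ 2 := by
      rw [div_pow]
      field_simp
      linear_combination hq2
    rw [h1]
    field_simp
  have hfull : HasDerivAt Gaux
      ((1 / (2 * π)) * ((0 + (4 - 2 * x) / (2 * q)) - 2 * (-1 / q))) x :=
    (((hasDerivAt_const x π).add hsqrt).sub (harctan.const_mul 2)).const_mul (1 / (2 * π))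
  convert hfull using 1
  have hroot : Real.sqrt (1 / x - 1 / 4) = q / (2 * x) := by
    rw [show 1 / x - 1 / 4 = (q / (2 * x)) ^ 2 by
      rw [div_pow, hq2]; field_simp; ring]
    exact Real.sqrt_sq (by positivity)
  rw [fX, if_pos ⟨hx0, hx4.le⟩, hroot]
  have hsimp : (0 + (4 - 2 * x) / (2 * q) - 2 * (-1 / q)) = (4 - x) / q := by
    field_simp
    ring
  rw [hsimp]
  field_simp
  linear_combination hq2

theorem quarter_circle_cdf_closed_form :
    (∀ x ∈ Set.Ioo (0 : ℝ) 4, HasDerivAt FXclosed (fX x) x) ∧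
    Filter.Tendsto FXclosed (nhdsWithin 0 (Set.Ioi 0)) (nhds 0) := by
  have hmem4 : Set.Ioo (0:ℝ) 4 ∈ nhdsWithin (0:ℝ) (Set.Ioi 0) := by
    rw [mem_nhdsWithin]
    exact ⟨Set.Iio 4, isOpen_Iio, by norm_num, by
      rintro y ⟨hy1, hy2⟩; exact ⟨hy2, hy1⟩⟩
  constructor
  · rintro x ⟨hx0, hx4⟩
    have hmem : Set.Ioo (0:ℝ) 4 ∈ nhds x := isOpen_Ioo.mem_nhds ⟨hx0, hx4⟩
    have heq : FXclosed =ᶠ[nhds x] Gaux :=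
      Filter.eventuallyEq_of_mem hmem (fun y hy => FX_eq_Gaux hy.1 hy.2)
    exact heq.hasDerivAt_iff.2 (Gaux_hasDerivAt hx0 hx4)
  · have heq : FXclosed =ᶠ[nhdsWithin 0 (Set.Ioi 0)] Gaux :=
      Filter.eventuallyEq_of_mem hmem4 (fun y hy => FX_eq_Gaux hy.1 hy.2)
    rw [Filter.tendsto_congr' heq]
    -- limit of Gaux at 0⁺
    have hsq : Filter.Tendsto (fun y : ℝ => Real.sqrt (y * (4 - y)))
        (nhdsWithin 0 (Set.Ioi 0)) (nhds 0) := by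
      have hc : Continuous fun y : ℝ => Real.sqrt (y * (4 - y)) := by continuity
      have h := hc.tendsto 0
      simp only [mul_comm, zero_mul, Real.sqrt_zero] at h
      exact (by simpa using h : Filter.Tendsto (fun y : ℝ => Real.sqrt (y * (4 - y)))
        (nhds 0) (nhds 0)).mono_left nhdsWithin_le_nhds
    have hargTop : Filter.Tendsto (fun y : ℝ => (2 - y) / Real.sqrt (y * (4 - y)))
        (nhdsWithin 0 (Set.Ioi 0)) Filter.atTop := by
      have hnum : Filter.Tendsto (fun y : ℝ => (2 - y))
          (nhdsWithin 0 (Set.Ioi 0)) (nhds 2) := by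
        have h : Filter.Tendsto (fun y : ℝ => (2:ℝ) - y) (nhds 0) (nhds (2 - 0)) :=
          tendsto_const_nhds.sub Filter.tendsto_id
        simpa using h.mono_left nhdsWithin_le_nhds
      have hinv : Filter.Tendsto (fun y : ℝ => (Real.sqrt (y * (4 - y)))⁻¹)
          (nhdsWithin 0 (Set.Ioi 0)) Filter.atTop := by
        apply tendsto_inv_nhdsGT_zero.comp
        rw [tendsto_nhdsWithin_iff]
        refine ⟨hsq, ?_⟩
        filter_upwards [hmem4] with y hy
        have h1 : (0:ℝ) < y := hy.1
        have h2 : y < 4 := hy.2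
        exact Real.sqrt_pos.2 (by nlinarith)
      have h := hnum.pos_mul_atTop (by norm_num : (0:ℝ) < 2) hinv
      simpa [div_eq_mul_inv] using h
    have harc : Filter.Tendsto (fun y : ℝ =>
        Real.arctan ((2 - y) / Real.sqrt (y * (4 - y))))
        (nhdsWithin 0 (Set.Ioi 0)) (nhds (π / 2)) :=
      (Real.tendsto_arctan_atTop.mono_right nhdsWithin_le_nhds).comp hargTop
    have hfin : Filter.Tendsto Gaux (nhdsWithin 0 (Set.Ioi 0))
        (nhds ((1 / (2 * π)) * (π + 0 - 2 * (π / 2)))) :=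
      (((tendsto_const_nhds.add hsq).sub (harc.const_mul 2)).const_mul (1 / (2 * π)))
    convert hfin using 2
    ring
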